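/- Let G be a finite group acting transitively on a finite set Ω with point stabilizer H and minimal nontrivial component degree d_H. If S ⊆ G, Δ₁, Δ₂ ⊆ Ω with |S|·|Δ₁|·|Δ₂| ≥ |Ω|²|G|/d_H, then there exist g ∈ S, ω₁ ∈ Δ₁, ω₂ ∈ Δ₂ with g(ω₁) = ω₂. -/

import Mathlib

open scoped BigOperators
open scoped RealInnerProductSpace
open Module

/-- A subspace of `ℝ^Ω` invariant under the permutation action of `G`. -/
def PermInvariant (G : Type*) [Group G] {Ω : Type*} [MulAction G Ω]
    (p : Submodule ℝ (Ω → ℝ)) : Prop :=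
  ∀ (g : G) (f : Ω → ℝ), f ∈ p → (fun ω => f (g⁻¹ • ω)) ∈ p

/-- A nontrivial irreducible component of the permutation representation of `G` on `ℝ^Ω`. -/
def IsNontrivIrredComponent (G : Type*) [Group G] {Ω : Type*} [MulAction G Ω]
    (p : Submodule ℝ (Ω → ℝ)) : Prop :=
  PermInvariant G p ∧ p ≠ ⊥ ∧
    (∀ q : Submodule ℝ (Ω → ℝ), q ≤ p → PermInvariant G q → q = ⊥ ∨ q = p) ∧
    (∃ (g : G) (f : Ω → ℝ), f ∈ p ∧ (fun ω => f (g⁻¹ • ω)) ≠ f)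

noncomputable section
namespace QAM

variable {G : Type*} [Group G] {Ω : Type*} [Fintype Ω] [MulAction G Ω]

/-- The permutation action of `g` on `ℝ^Ω` as a linear isometry. -/
def perm (g : G) : EuclideanSpace ℝ Ω ≃ₗᵢ[ℝ] EuclideanSpace ℝ Ω :=
  LinearIsometryEquiv.piLpCongrLeft 2 ℝ ℝ (MulAction.toPerm g)

lemma perm_apply (g : G) (f : EuclideanSpace ℝ Ω) (ω : Ω) : perm g f ω = f (g⁻¹ • ω) := rfl

lemma perm_perm (g h : G) (f : EuclideanSpace ℝ Ω) : perm g (perm h f) = perm (g * h) f := by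
  ext ω
  rw [perm_apply, perm_apply, perm_apply, mul_inv_rev, mul_smul]

lemma perm_id (f : EuclideanSpace ℝ Ω) : perm (1 : G) f = f := by
  ext ω; rw [perm_apply, inv_one, one_smul]

lemma inner_perm_perm (g : G) (f h : EuclideanSpace ℝ Ω) :
    ⟪perm g f, perm g h⟫ = ⟪f, h⟫ :=
  (perm g).inner_map_map f h

lemma inner_perm_left (g : G) (f v : EuclideanSpace ℝ Ω) :
    ⟪perm g f, v⟫ = ⟪f, perm g⁻¹ v⟫ := by
  conv_lhs => rw [show v = perm g (perm g⁻¹ v) by rw [perm_perm, mul_inv_cancel, perm_id]]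
  exact inner_perm_perm g f (perm g⁻¹ v)

/-- The all-ones vector. -/
def one : EuclideanSpace ℝ Ω := WithLp.toLp 2 (fun _ => 1)

lemma perm_one_vec (g : G) : perm g (one : EuclideanSpace ℝ Ω) = one := rfl

lemma euclid_inner (x y : EuclideanSpace ℝ Ω) : ⟪x, y⟫ = ∑ ω, x ω * y ω := by
  simp [PiLp.inner_apply, RCLike.inner_apply, conj_trivial]
  exact Finset.sum_congr rfl fun _ _ => mul_comm _ _

variable [Fintype G]

/-- The averaged PSD operator `v ↦ ∑_g ⟪π(g)u, v⟫ π(g)u`. -/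
def Mop (u : EuclideanSpace ℝ Ω) : EuclideanSpace ℝ Ω →ₗ[ℝ] EuclideanSpace ℝ Ω where
  toFun v := ∑ g : G, (⟪perm g u, v⟫ : ℝ) • (perm g u : EuclideanSpace ℝ Ω)
  map_add' v w := by
    have : ∀ g : G, (⟪perm g u, v + w⟫ : ℝ) • (perm g u : EuclideanSpace ℝ Ω)
        = (⟪perm g u, v⟫ : ℝ) • (perm g u : EuclideanSpace ℝ Ω)
          + (⟪perm g u, w⟫ : ℝ) • (perm g u : EuclideanSpace ℝ Ω) := by
      intro g; rw [inner_add_right, add_smul]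
    simp only [this, Finset.sum_add_distrib]
  map_smul' c v := by
    have : ∀ g : G, (⟪perm g u, c • v⟫ : ℝ) • (perm g u : EuclideanSpace ℝ Ω)
        = c • ((⟪perm g u, v⟫ : ℝ) • (perm g u : EuclideanSpace ℝ Ω)) := by
      intro g; rw [real_inner_smul_right, smul_smul]
    simp only [this, RingHom.id_apply, Finset.smul_sum]

lemma Mop_apply (u v : EuclideanSpace ℝ Ω) :
    Mop (G := G) u v = ∑ g : G, (⟪perm g u, v⟫ : ℝ) • (perm g u : EuclideanSpace ℝ Ω) := rfl

lemma inner_Mop (u v w : EuclideanSpace ℝ Ω) :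
    ⟪Mop (G := G) u v, w⟫ = ∑ g : G, (⟪perm g u, v⟫ : ℝ) * ⟪perm g u, w⟫ := by
  rw [Mop_apply, sum_inner]
  exact Finset.sum_congr rfl fun g _ => real_inner_smul_left _ _ _

lemma Mop_symm (u : EuclideanSpace ℝ Ω) : (Mop (G := G) u).IsSymmetric := by
  intro v w
  rw [show (inner ℝ v (Mop (G := G) u w) : ℝ) = inner ℝ (Mop (G := G) u w) v from
    real_inner_comm _ _, inner_Mop, inner_Mop]
  exact Finset.sum_congr rfl fun g _ => mul_comm _ _

lemma Mop_perm (u : EuclideanSpace ℝ Ω) (h : G) (v : EuclideanSpace ℝ Ω) :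
    Mop (G := G) u (perm h v) = perm h (Mop (G := G) u v) := by
  rw [Mop_apply, Mop_apply, map_sum]
  rw [← Equiv.sum_comp (Equiv.mulLeft h)
    (fun g => (⟪perm g u, perm h v⟫ : ℝ) • (perm g u : EuclideanSpace ℝ Ω))]
  refine Finset.sum_congr rfl fun g _ => ?_
  have h1 : perm (Equiv.mulLeft h g) u = perm h (perm g u) := by
    rw [perm_perm]; rfl
  rw [h1, (perm h).map_smul, inner_perm_perm]

lemma Mop_const (u : EuclideanSpace ℝ Ω) (hu : ⟪u, (one : EuclideanSpace ℝ Ω)⟫ = 0) (c : ℝ) :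
    Mop (G := G) u (c • (one : EuclideanSpace ℝ Ω)) = 0 := by
  rw [Mop_apply]
  refine Finset.sum_eq_zero fun g _ => ?_
  have : ⟪perm g u, c • (one : EuclideanSpace ℝ Ω)⟫ = (0 : ℝ) := by
    rw [real_inner_smul_right, inner_perm_left, perm_one_vec, hu, mul_zero]
  rw [this, zero_smul]

section Structure

variable {G : Type*} [Group G] {Ω : Type*} [Fintype Ω] [MulAction G Ω]

lemma hcomm {Ω : Type*} [Fintype Ω] (x y : EuclideanSpace ℝ Ω) : ⟪x, y⟫ = ⟪y, x⟫ :=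
  real_inner_comm y x

lemma exists_minimal_invariant :
    ∀ (n : ℕ) (p : Submodule ℝ (Ω → ℝ)), finrank ℝ p ≤ n → PermInvariant G p → p ≠ ⊥ →
    ∃ q, q ≤ p ∧ PermInvariant G q ∧ q ≠ ⊥ ∧
      (∀ r, r ≤ q → PermInvariant G r → r = ⊥ ∨ r = q) := by
  intro n
  induction n with
  | zero =>
    intro p hpn hp hne
    exact absurd (Submodule.finrank_eq_zero.mp (Nat.le_zero.mp hpn)) hne
  | succ n ih =>
    intro p hpn hp hne
    by_cases hmin : ∀ r, r ≤ p → PermInvariant G r → r = ⊥ ∨ r = p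
    · exact ⟨p, le_rfl, hp, hne, hmin⟩
    · push_neg at hmin
      obtain ⟨r, hrp, hri, hr0, hrne⟩ := hmin
      have hlt : finrank ℝ r < finrank ℝ p :=
        Submodule.finrank_lt_finrank_of_lt (lt_of_le_of_ne hrp hrne)
      obtain ⟨q, hq1, hq2, hq3, hq4⟩ := ih r (by omega) hri hr0
      exact ⟨q, le_trans hq1 hrp, hq2, hq3, hq4⟩

lemma le_finrank_of_invariant {d : ℕ}
    (hlb : ∀ k ∈ {k : ℕ | ∃ p : Submodule ℝ (Ω → ℝ),
      IsNontrivIrredComponent G p ∧ k = finrank ℝ p}, d ≤ k)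
    (p : Submodule ℝ (Ω → ℝ)) (hp : PermInvariant G p) (hne : p ≠ ⊥)
    (hfix : ∀ f ∈ p, (∀ g : G, (fun ω => f (g⁻¹ • ω)) = f) → f = 0) :
    d ≤ finrank ℝ p := by
  obtain ⟨q, hqp, hqi, hqne, hqmin⟩ :=
    exists_minimal_invariant (G := G) (finrank ℝ p) p le_rfl hp hne
  have hnontriv : ∃ (g : G) (f : Ω → ℝ), f ∈ q ∧ (fun ω => f (g⁻¹ • ω)) ≠ f := by
    by_contra hc
    push_neg at hc
    refine hqne ((Submodule.eq_bot_iff q).mpr fun f hf => ?_)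
    exact hfix f (hqp hf) fun g => hc g f hf
  have hmem : finrank ℝ q ∈ {k : ℕ | ∃ p : Submodule ℝ (Ω → ℝ),
      IsNontrivIrredComponent G p ∧ k = finrank ℝ p} := ⟨q, ⟨hqi, hqne, hqmin, hnontriv⟩, rfl⟩
  exact le_trans (hlb _ hmem) (Submodule.finrank_mono hqp)

lemma fixed_eq [Nonempty Ω] [MulAction.IsPretransitive G Ω] (f : EuclideanSpace ℝ Ω)
    (hf : ∀ g : G, perm g f = f) :
    f = f (Classical.arbitrary Ω) • (one : EuclideanSpace ℝ Ω) := by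
  ext ω
  obtain ⟨g, hg⟩ := MulAction.exists_smul_eq G (Classical.arbitrary Ω) ω
  have h1 : perm g⁻¹ f (Classical.arbitrary Ω) = f (Classical.arbitrary Ω) := by rw [hf]
  rw [perm_apply, inv_inv, hg] at h1
  show f ω = f (Classical.arbitrary Ω) * 1
  rw [mul_one, h1]

/-- Eigenspace of an endomorphism. -/
def eigSp (T : EuclideanSpace ℝ Ω →ₗ[ℝ] EuclideanSpace ℝ Ω) (μ : ℝ) :
    Submodule ℝ (EuclideanSpace ℝ Ω) := LinearMap.ker (T - μ • LinearMap.id)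

lemma mem_eigSp {T : EuclideanSpace ℝ Ω →ₗ[ℝ] EuclideanSpace ℝ Ω} {μ : ℝ}
    {f : EuclideanSpace ℝ Ω} : f ∈ eigSp T μ ↔ T f = μ • f := by
  rw [eigSp, LinearMap.mem_ker, LinearMap.sub_apply, LinearMap.smul_apply, LinearMap.id_apply,
    sub_eq_zero]

end Structure
section Key

variable {G : Type*} [Group G] [Fintype G] {Ω : Type*} [Fintype Ω] [MulAction G Ω]

lemma key [Nonempty Ω] [MulAction.IsPretransitive G Ω] {d : ℕ} (hd0 : 0 < d)
    (hlb : ∀ k ∈ {k : ℕ | ∃ p : Submodule ℝ (Ω → ℝ),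
      IsNontrivIrredComponent G p ∧ k = finrank ℝ p}, d ≤ k)
    (u : EuclideanSpace ℝ Ω) (hu : ⟪u, (one : EuclideanSpace ℝ Ω)⟫ = 0)
    (v : EuclideanSpace ℝ Ω) :
    ⟪Mop (G := G) u v, v⟫ ≤ ((Fintype.card G : ℝ) * ‖u‖ ^ 2 / d) * ‖v‖ ^ 2 := by
  classical
  set T := Mop (G := G) u with hT
  have hsym := Mop_symm (G := G) u
  have hn : finrank ℝ (EuclideanSpace ℝ Ω) = Fintype.card Ω := finrank_euclideanSpace
  set b := hsym.eigenvectorBasis hn with hb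
  set μ := hsym.eigenvalues hn with hμ
  have happ : ∀ i, T (b i) = μ i • b i := fun i => by
    exact_mod_cast hsym.apply_eigenvectorBasis hn i
  have hpsd : ∀ w : EuclideanSpace ℝ Ω, 0 ≤ ⟪T w, w⟫ := fun w => by
    rw [hT, inner_Mop]
    exact Finset.sum_nonneg fun g _ => mul_self_nonneg _
  have hbnorm : ∀ i, (⟪b i, b i⟫ : ℝ) = 1 := fun i => by
    rw [real_inner_self_eq_norm_sq, b.orthonormal.1 i]
    norm_num
  have hμval : ∀ i, μ i = ⟪T (b i), b i⟫ := fun i => by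
    rw [happ i, real_inner_smul_left, hbnorm, mul_one]
  have hμnn : ∀ i, 0 ≤ μ i := fun i => by rw [hμval i]; exact hpsd (b i)
  have hCnn : (0 : ℝ) ≤ (Fintype.card G : ℝ) * ‖u‖ ^ 2 / d :=
    div_nonneg (mul_nonneg (Nat.cast_nonneg _) (sq_nonneg _)) (Nat.cast_nonneg _)
  -- trace identity
  have htr : ∑ i, μ i = (Fintype.card G : ℝ) * ‖u‖ ^ 2 := by
    have h1 : ∀ i, μ i = ∑ g : G, (⟪perm g u, b i⟫ : ℝ) * ⟪perm g u, b i⟫ := fun i => by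
      rw [hμval i, hT, inner_Mop]
    rw [Finset.sum_congr rfl fun i _ => h1 i, Finset.sum_comm]
    have h2 : ∀ g : G, ∑ i, (⟪perm g u, b i⟫ : ℝ) * ⟪perm g u, b i⟫ = ‖u‖ ^ 2 := fun g => by
      have h3 := b.sum_inner_mul_inner (perm g u) (perm g u)
      rw [real_inner_self_eq_norm_sq, (perm g).norm_map] at h3
      rw [← h3]
      exact Finset.sum_congr rfl fun i _ => by rw [hcomm (b i) (perm g u)]
    rw [Finset.sum_congr rfl fun g _ => h2 g, Finset.sum_const, Finset.card_univ, nsmul_eq_mul]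
  -- pointwise eigenvalue bound
  have hbound : ∀ i, μ i ≤ (Fintype.card G : ℝ) * ‖u‖ ^ 2 / d := by
    intro i
    rcases le_or_gt (μ i) 0 with hle | hpos
    · exact le_trans hle hCnn
    · set E : Submodule ℝ (EuclideanSpace ℝ Ω) := eigSp T (μ i) with hE
      set L := WithLp.linearEquiv 2 ℝ (Ω → ℝ) with hLdef
      set E' : Submodule ℝ (Ω → ℝ) := E.map (L : EuclideanSpace ℝ Ω →ₗ[ℝ] (Ω → ℝ)) with hE'
      have hbiE : b i ∈ E := mem_eigSp.mpr (happ i)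
      -- invariance of E'
      have hinv : PermInvariant G E' := by
        intro g f hf
        obtain ⟨y, hy, hyf⟩ := hf
        have hyE : T y = μ i • y := mem_eigSp.mp hy
        have hmem : perm g y ∈ E := mem_eigSp.mpr (by
          rw [hT] at hyE ⊢
          rw [Mop_perm, hyE, (perm g).map_smul])
        refine ⟨perm g y, hmem, ?_⟩
        funext ω
        exact congrFun hyf (g⁻¹ • ω)
      -- E' nontrivial
      have hne : E' ≠ ⊥ := by
        rw [Submodule.ne_bot_iff]
        refine ⟨L (b i), Submodule.mem_map_of_mem hbiE, fun h0 => ?_⟩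
        have hb0 : b i = 0 := by simpa using h0
        have := b.orthonormal.1 i
        rw [hb0, norm_zero] at this
        norm_num at this
      -- fixed vectors in E' vanish
      have hfix : ∀ f ∈ E', (∀ g : G, (fun ω => f (g⁻¹ • ω)) = f) → f = 0 := by
        intro f hf hfixf
        obtain ⟨y, hy, hyf⟩ := hf
        subst hyf
        have hfixy : ∀ g : G, perm g y = y := fun g => by
          ext ω
          exact congrFun (hfixf g) ω
        have hyc := fixed_eq (G := G) y hfixy
        have h0 : T y = 0 := by
          rw [hT, hyc]
          exact Mop_const u hu _
        have hyE : T y = μ i • y := mem_eigSp.mp hy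
        have : y = 0 := by
          have := h0 ▸ hyE
          exact (smul_eq_zero_iff_right (ne_of_gt hpos)).mp this.symm
        rw [this, map_zero]
      have hd_le : d ≤ finrank ℝ E' := le_finrank_of_invariant hlb E' hinv hne hfix
      have hrk_eq : finrank ℝ E' = finrank ℝ E := LinearEquiv.finrank_map_eq L E
      -- E is contained in the span of eigenvectors with eigenvalue μ i
      set m := (Finset.univ.filter (fun j => μ j = μ i)).card with hm
      have hEle : E ≤ Submodule.span ℝ
          ((Finset.univ.filter (fun j => μ j = μ i)).image (fun j => b j) : Set _) := by
        intro w hw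
        have hwE : T w = μ i • w := mem_eigSp.mp hw
        rw [← b.sum_repr' w]
        refine Submodule.sum_mem _ fun j _ => ?_
        by_cases hj : μ j = μ i
        · refine Submodule.smul_mem _ _ (Submodule.subset_span ?_)
          exact Finset.mem_coe.mpr (Finset.mem_image_of_mem _
            (Finset.mem_filter.mpr ⟨Finset.mem_univ _, hj⟩))
        · have hc : (⟪b j, w⟫ : ℝ) = 0 := by
            have e1 : (⟪T (b j), w⟫ : ℝ) = μ j * ⟪b j, w⟫ := by
              rw [happ j, real_inner_smul_left]
            have e2 : (⟪T (b j), w⟫ : ℝ) = μ i * ⟪b j, w⟫ := by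
              rw [hsym (b j) w, hwE, real_inner_smul_right]
            have e3 : (μ j - μ i) * ⟪b j, w⟫ = 0 := by
              rw [sub_mul, ← e1, ← e2, sub_self]
            rcases mul_eq_zero.mp e3 with h | h
            · exact absurd (sub_eq_zero.mp h) hj
            · exact h
          rw [hc, zero_smul]
          exact Submodule.zero_mem _
      have hrk_le : finrank ℝ E ≤ m := by
        refine le_trans (Submodule.finrank_mono hEle) (le_trans (finrank_span_finset_le_card _) ?_)
        exact Finset.card_image_le
      have hdm : (d : ℝ) ≤ (m : ℝ) := by
        exact_mod_cast le_trans hd_le (le_trans (le_of_eq hrk_eq) hrk_le)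
      have hsum : (m : ℝ) * μ i ≤ ∑ j, μ j := by
        have e1 : ∑ j ∈ Finset.univ.filter (fun j => μ j = μ i), μ j = (m : ℝ) * μ i := by
          rw [Finset.sum_congr rfl fun j hj => (Finset.mem_filter.mp hj).2, Finset.sum_const,
            nsmul_eq_mul, hm]
        rw [← e1]
        exact Finset.sum_le_sum_of_subset_of_nonneg (Finset.filter_subset _ _)
          (fun j _ _ => hμnn j)
      rw [le_div_iff₀ (by exact_mod_cast hd0)]
      calc μ i * d ≤ μ i * m := by
            exact mul_le_mul_of_nonneg_left hdm (le_of_lt hpos)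
        _ = (m : ℝ) * μ i := mul_comm _ _
        _ ≤ ∑ j, μ j := hsum
        _ = (Fintype.card G : ℝ) * ‖u‖ ^ 2 := htr
  -- expansion of the quadratic form
  have hTvv : ⟪T v, v⟫ = ∑ i, μ i * (⟪b i, v⟫ : ℝ) ^ 2 := by
    have h1 := b.sum_inner_mul_inner v (T v)
    have h2 : ∀ i, (⟪b i, T v⟫ : ℝ) = μ i * ⟪b i, v⟫ := fun i => by
      rw [← hsym (b i) v, happ i, real_inner_smul_left]
    calc (⟪T v, v⟫ : ℝ) = ⟪v, T v⟫ := hsym v v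
      _ = ∑ i, (⟪v, b i⟫ : ℝ) * ⟪b i, T v⟫ := h1.symm
      _ = ∑ i, μ i * (⟪b i, v⟫ : ℝ) ^ 2 := Finset.sum_congr rfl fun i _ => by
          rw [h2 i, hcomm v (b i)]; ring
  have hv2 : ∑ i, (⟪b i, v⟫ : ℝ) ^ 2 = ‖v‖ ^ 2 := by
    have h1 := b.sum_inner_mul_inner v v
    rw [real_inner_self_eq_norm_sq] at h1
    rw [← h1]
    exact Finset.sum_congr rfl fun i _ => by rw [hcomm v (b i)]; ring
  calc (⟪T v, v⟫ : ℝ) = ∑ i, μ i * (⟪b i, v⟫ : ℝ) ^ 2 := hTvv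
    _ ≤ ∑ i, ((Fintype.card G : ℝ) * ‖u‖ ^ 2 / d) * (⟪b i, v⟫ : ℝ) ^ 2 :=
        Finset.sum_le_sum fun i _ => mul_le_mul_of_nonneg_right (hbound i) (sq_nonneg _)
    _ = ((Fintype.card G : ℝ) * ‖u‖ ^ 2 / d) * ‖v‖ ^ 2 := by rw [← Finset.mul_sum, hv2]

end Key

section Indicator

variable {Ω : Type*} [Fintype Ω] [DecidableEq Ω]

/-- Indicator vector of a finite set. -/
def ind (Δ : Finset Ω) : EuclideanSpace ℝ Ω := WithLp.toLp 2 (fun ω => if ω ∈ Δ then (1 : ℝ) else 0)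

lemma ind_inner_one (Δ : Finset Ω) : ⟪ind Δ, (one : EuclideanSpace ℝ Ω)⟫ = (Δ.card : ℝ) := by
  rw [euclid_inner]
  simp only [ind, one, mul_one]
  rw [Finset.sum_ite_mem, Finset.univ_inter, Finset.sum_const, nsmul_eq_mul, mul_one]

lemma one_inner_one : ⟪(one : EuclideanSpace ℝ Ω), (one : EuclideanSpace ℝ Ω)⟫
    = (Fintype.card Ω : ℝ) := by
  rw [euclid_inner]
  simp [one, Finset.card_univ]

lemma ind_inner_self (Δ : Finset Ω) : ⟪ind Δ, ind Δ⟫ = (Δ.card : ℝ) := by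
  rw [euclid_inner]
  have h1 : ∀ ω, ind Δ ω * ind Δ ω = if ω ∈ Δ then (1 : ℝ) else 0 := by
    intro ω; by_cases hω : ω ∈ Δ <;> simp [ind, hω]
  rw [Finset.sum_congr rfl fun ω _ => h1 ω, Finset.sum_ite_mem, Finset.univ_inter,
    Finset.sum_const, nsmul_eq_mul, mul_one]

end Indicator

/-- Purely arithmetic endgame. -/
lemma arith (n NG a bb s dd B1 B2 : ℝ) (hn0 : 0 < n) (hd : 0 < dd) (hG : 0 < NG)
    (ha : 0 < a) (hb : 0 < bb) (hs : 0 < s) (han : a ≤ n) (hbn : bb ≤ n)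
    (hB1 : B1 = a - a ^ 2 / n) (hB2 : B2 = bb - bb ^ 2 / n)
    (hX : s * (a * bb / n) ^ 2 ≤ NG * B1 / dd * B2)
    (h : n ^ 2 * NG / dd ≤ s * a * bb) : False := by
  have hne : n ≠ 0 := ne_of_gt hn0
  have hde : dd ≠ 0 := ne_of_gt hd
  have hd'' : n ^ 2 * NG ≤ s * a * bb * dd := (div_le_iff₀ hd).mp h
  have e1 : s * (a * bb) ^ 2 * dd ≤ NG * B1 * B2 * n ^ 2 := by
    have h2 := mul_le_mul_of_nonneg_right hX (le_of_lt (mul_pos hd (pow_pos hn0 2)))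
    calc s * (a * bb) ^ 2 * dd = s * (a * bb / n) ^ 2 * (dd * n ^ 2) := by
          field_simp
      _ ≤ NG * B1 / dd * B2 * (dd * n ^ 2) := h2
      _ = NG * B1 * B2 * n ^ 2 := by
          field_simp
  have e2 : NG * B1 * B2 * n ^ 2 = NG * (a * bb) * ((n - a) * (n - bb)) := by
    rw [hB1, hB2]
    field_simp
  have e3 : (n - a) * (n - bb) < n ^ 2 := by nlinarith
  have e4 : NG * (a * bb) * ((n - a) * (n - bb)) < NG * (a * bb) * n ^ 2 := by
    have hpos : 0 < NG * (a * bb) := by positivity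
    exact mul_lt_mul_of_pos_left e3 hpos
  have e5 : NG * (a * bb) * n ^ 2 ≤ s * (a * bb) ^ 2 * dd := by
    nlinarith [mul_le_mul_of_nonneg_right hd'' (le_of_lt (mul_pos ha hb))]
  linarith

end QAM
end

open QAM in
/-- Quasirandom mixing for group actions: if `|S||Δ₁||Δ₂| ≥ |Ω|²|G|/d_H` then some
`g ∈ S` maps some `ω₁ ∈ Δ₁` to some `ω₂ ∈ Δ₂`. -/
theorem quasirandom_action_mixing
    {G : Type*} [Group G] [Fintype G] {Ω : Type*} [Fintype Ω]
    [MulAction G Ω] [MulAction.IsPretransitive G Ω]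
    (d : ℕ)
    (hd : IsLeast {k : ℕ | ∃ p : Submodule ℝ (Ω → ℝ),
      IsNontrivIrredComponent G p ∧ k = Module.finrank ℝ p} d)
    (S : Finset G) (Δ₁ Δ₂ : Finset Ω)
    (hS : S.Nonempty) (hΔ₁ : Δ₁.Nonempty) (hΔ₂ : Δ₂.Nonempty)
    (h : ((S.card : ℝ) * (Δ₁.card : ℝ) * (Δ₂.card : ℝ)) ≥
      (Fintype.card Ω : ℝ) ^ 2 * (Fintype.card G : ℝ) / (d : ℝ)) :
    ∃ g ∈ S, ∃ ω₁ ∈ Δ₁, ∃ ω₂ ∈ Δ₂, g • ω₁ = ω₂ := by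
  classical
  by_contra hcon
  push_neg at hcon
  have hΩ : Nonempty Ω := ⟨hΔ₁.choose⟩
  have hd0 : 0 < d := by
    obtain ⟨p, hpcomp, hdp⟩ := hd.1
    rcases Nat.eq_zero_or_pos d with h0 | h0
    · rw [h0] at hdp
      exact absurd (Submodule.finrank_eq_zero.mp hdp.symm) hpcomp.2.1
    · exact h0
  have hn0 : (0 : ℝ) < (Fintype.card Ω : ℝ) := by exact_mod_cast Fintype.card_pos
  have hdR : (0 : ℝ) < (d : ℝ) := by exact_mod_cast hd0
  have hG0 : (0 : ℝ) < (Fintype.card G : ℝ) := by exact_mod_cast Fintype.card_pos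
  have ha0 : (0 : ℝ) < (Δ₁.card : ℝ) := by exact_mod_cast Finset.card_pos.mpr hΔ₁
  have hb0 : (0 : ℝ) < (Δ₂.card : ℝ) := by exact_mod_cast Finset.card_pos.mpr hΔ₂
  have hs0 : (0 : ℝ) < (S.card : ℝ) := by exact_mod_cast Finset.card_pos.mpr hS
  have han : (Δ₁.card : ℝ) ≤ (Fintype.card Ω : ℝ) := by exact_mod_cast Finset.card_le_univ Δ₁
  have hbn : (Δ₂.card : ℝ) ≤ (Fintype.card Ω : ℝ) := by exact_mod_cast Finset.card_le_univ Δ₂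
  set f₁ : EuclideanSpace ℝ Ω :=
    ind Δ₁ - ((Δ₁.card : ℝ) / (Fintype.card Ω : ℝ)) • (one : EuclideanSpace ℝ Ω) with hf₁
  set f₂ : EuclideanSpace ℝ Ω :=
    ind Δ₂ - ((Δ₂.card : ℝ) / (Fintype.card Ω : ℝ)) • (one : EuclideanSpace ℝ Ω) with hf₂
  have hone1 : ⟪f₁, (one : EuclideanSpace ℝ Ω)⟫ = 0 := by
    rw [hf₁, inner_sub_left, real_inner_smul_left, ind_inner_one, one_inner_one]
    field_simp
    ring
  have hnorm1 : ‖f₁‖ ^ 2 = (Δ₁.card : ℝ) - (Δ₁.card : ℝ) ^ 2 / (Fintype.card Ω : ℝ) := by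
    rw [← real_inner_self_eq_norm_sq, hf₁, inner_sub_sub_self, real_inner_smul_left,
      real_inner_smul_right, real_inner_smul_left, real_inner_smul_right, ind_inner_self,
      ind_inner_one, one_inner_one, hcomm (one : EuclideanSpace ℝ Ω) (ind Δ₁), ind_inner_one]
    field_simp
    ring
  have hnorm2 : ‖f₂‖ ^ 2 = (Δ₂.card : ℝ) - (Δ₂.card : ℝ) ^ 2 / (Fintype.card Ω : ℝ) := by
    rw [← real_inner_self_eq_norm_sq, hf₂, inner_sub_sub_self, real_inner_smul_left,
      real_inner_smul_right, real_inner_smul_left, real_inner_smul_right, ind_inner_self,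
      ind_inner_one, one_inner_one, hcomm (one : EuclideanSpace ℝ Ω) (ind Δ₂), ind_inner_one]
    field_simp
    ring
  have hgval : ∀ g ∈ S,
      ⟪perm g f₁, f₂⟫ = -((Δ₁.card : ℝ) * (Δ₂.card : ℝ) / (Fintype.card Ω : ℝ)) := by
    intro g hg
    have hzero : ⟪perm g (ind Δ₁), (ind Δ₂ : EuclideanSpace ℝ Ω)⟫ = 0 := by
      rw [euclid_inner]
      refine Finset.sum_eq_zero fun ω _ => ?_
      rw [perm_apply]
      by_cases h1 : g⁻¹ • ω ∈ Δ₁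
      · by_cases h2 : ω ∈ Δ₂
        · exact absurd (smul_inv_smul g ω) (hcon g hg (g⁻¹ • ω) h1 ω h2)
        · have : (ind Δ₂ : EuclideanSpace ℝ Ω) ω = 0 := by simp [ind, h2]
          rw [this, mul_zero]
      · have : (ind Δ₁ : EuclideanSpace ℝ Ω) (g⁻¹ • ω) = 0 := by simp [ind, h1]
        rw [this, zero_mul]
    have hp1 : perm g f₁ = perm g (ind Δ₁)
        - ((Δ₁.card : ℝ) / (Fintype.card Ω : ℝ)) • (one : EuclideanSpace ℝ Ω) := by
      rw [hf₁, (perm g).map_sub, (perm g).map_smul, perm_one_vec]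
    have hpχone : ⟪perm g (ind Δ₁), (one : EuclideanSpace ℝ Ω)⟫ = (Δ₁.card : ℝ) := by
      rw [inner_perm_left, perm_one_vec, ind_inner_one]
    have honeχ₂ : ⟪(one : EuclideanSpace ℝ Ω), (ind Δ₂ : EuclideanSpace ℝ Ω)⟫
        = (Δ₂.card : ℝ) := by
      rw [hcomm, ind_inner_one]
    rw [hp1, hf₂, inner_sub_left, inner_sub_right, inner_sub_right, hzero,
      real_inner_smul_right, hpχone, real_inner_smul_left, honeχ₂, real_inner_smul_left,
      real_inner_smul_right, one_inner_one]
    field_simp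
    ring
  have hXlow : ∑ g ∈ S, (⟪perm g f₁, f₂⟫ : ℝ) ^ 2
      = (S.card : ℝ) * ((Δ₁.card : ℝ) * (Δ₂.card : ℝ) / (Fintype.card Ω : ℝ)) ^ 2 := by
    have h1 : ∀ g ∈ S, (⟪perm g f₁, f₂⟫ : ℝ) ^ 2
        = ((Δ₁.card : ℝ) * (Δ₂.card : ℝ) / (Fintype.card Ω : ℝ)) ^ 2 := fun g hg => by
      rw [hgval g hg]; ring
    rw [Finset.sum_congr rfl h1, Finset.sum_const, nsmul_eq_mul]
  have hXle : ∑ g ∈ S, (⟪perm g f₁, f₂⟫ : ℝ) ^ 2 ≤ ∑ g : G, (⟪perm g f₁, f₂⟫ : ℝ) ^ 2 :=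
    Finset.sum_le_sum_of_subset_of_nonneg (Finset.subset_univ S) fun _ _ _ => sq_nonneg _
  have hM : ∑ g : G, (⟪perm g f₁, f₂⟫ : ℝ) ^ 2 = ⟪Mop (G := G) f₁ f₂, f₂⟫ := by
    rw [inner_Mop]
    exact Finset.sum_congr rfl fun g _ => pow_two _
  have hkey := key (G := G) hd0 (fun k hk => hd.2 hk) f₁ hone1 f₂
  have hchain : (S.card : ℝ) * ((Δ₁.card : ℝ) * (Δ₂.card : ℝ) / (Fintype.card Ω : ℝ)) ^ 2
      ≤ (Fintype.card G : ℝ) * ‖f₁‖ ^ 2 / (d : ℝ) * ‖f₂‖ ^ 2 := by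
    rw [← hXlow]
    refine le_trans hXle ?_
    rw [hM]
    exact hkey
  exact arith (Fintype.card Ω : ℝ) (Fintype.card G : ℝ) (Δ₁.card : ℝ) (Δ₂.card : ℝ)
    (S.card : ℝ) (d : ℝ) (‖f₁‖ ^ 2) (‖f₂‖ ^ 2) hn0 hdR hG0 ha0 hb0 hs0 han hbn
    hnorm1 hnorm2 hchain h
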